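/- arXiv:0802.3307 — 5 statements merged into one kernel-verified Lean document; each statement's English description precedes it below -/
import Mathlib

section
/- With the notation ⟨ε_t, δ_{k/n}⟩ = E(B_t(B_{(k+1)/n} - B_{k/n})) for fractional Brownian motion B with H = 1/4, there exists a constant C such that for all n ≥ 1, sup_{t∈[0,1]} Σ_{k=0}^{n-1} |⟨ε_t, δ_{k/n}⟩| ≤ C, i.e. this supremum is O(1) as n → ∞. -/
open MeasureTheory

lemma sqrt_abs_split (x : ℝ) :
    Real.sqrt |x| = Real.sqrt (max x 0) + Real.sqrt (max (-x) 0) := by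
  rcases le_total x 0 with h | h
  · rw [abs_of_nonpos h, max_eq_right h, Real.sqrt_zero,
      max_eq_left (by linarith), zero_add]
  · rw [abs_of_nonneg h, max_eq_left h, max_eq_right (by linarith),
      Real.sqrt_zero, add_zero]

/-- `sup_{t∈[0,1]} Σ_{k=0}^{n-1} |⟨ε_t, δ_{k/n}⟩| = O(1)` for fBm with `H = 1/4`. -/
theorem stmt_3 {Ω : Type*} [MeasurableSpace Ω] (μ : Measure Ω) [IsProbabilityMeasure μ]
    (B : ℝ → Ω → ℝ)
    (hcov : ∀ s t : ℝ, s ∈ Set.Icc (0:ℝ) 1 → t ∈ Set.Icc (0:ℝ) 1 →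
      ∫ ω, B s ω * B t ω ∂μ
        = (1/2) * (Real.sqrt t + Real.sqrt s - Real.sqrt |t - s|))
    (hint : ∀ s t : ℝ, Integrable (fun ω => B s ω * B t ω) μ) :
    ∃ C : ℝ, ∀ n : ℕ, 1 ≤ n → ∀ t : ℝ, t ∈ Set.Icc (0:ℝ) 1 →
      ∑ k ∈ Finset.range n,
        |∫ ω, B t ω * (B (((k:ℝ)+1)/n) ω - B ((k:ℝ)/n) ω) ∂μ| ≤ C := by
  refine ⟨2, fun n hn t ht => ?_⟩
  obtain ⟨ht0, ht1⟩ := ht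
  have hN : (0:ℝ) < (n:ℝ) := by exact_mod_cast Nat.pos_of_ne_zero (by omega)
  set G : ℕ → ℝ := fun k =>
    Real.sqrt ((k:ℝ)/(n:ℝ)) + Real.sqrt (max ((k:ℝ)/(n:ℝ) - t) 0)
      - Real.sqrt (max (t - (k:ℝ)/(n:ℝ)) 0) with hG
  have key : ∀ k ∈ Finset.range n,
      |∫ ω, B t ω * (B (((k:ℝ)+1)/n) ω - B ((k:ℝ)/n) ω) ∂μ|
        ≤ (1/2) * (G (k+1) - G k) := by
    intro k hk
    rw [Finset.mem_range] at hk
    set a : ℝ := ((k:ℝ)+1)/(n:ℝ) with ha'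
    set b : ℝ := (k:ℝ)/(n:ℝ) with hb'
    have hk1 : ((k:ℝ)+1) ≤ (n:ℝ) := by exact_mod_cast Nat.succ_le_of_lt hk
    have ha : a ∈ Set.Icc (0:ℝ) 1 := ⟨by positivity, by rw [div_le_one hN]; exact hk1⟩
    have hb : b ∈ Set.Icc (0:ℝ) 1 :=
      ⟨by positivity, by rw [div_le_one hN]; linarith⟩
    have hba : b ≤ a := by
      rw [ha', hb', div_le_div_iff_of_pos_right hN]
      linarith
    have hEq : ∫ ω, B t ω * (B a ω - B b ω) ∂μ
        = (∫ ω, B t ω * B a ω ∂μ) - ∫ ω, B t ω * B b ω ∂μ := by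
      rw [← integral_sub (hint t a) (hint t b)]
      congr 1; funext ω; ring
    rw [hEq, hcov t a ⟨ht0, ht1⟩ ha, hcov t b ⟨ht0, ht1⟩ hb,
      sqrt_abs_split (a - t), sqrt_abs_split (b - t), neg_sub, neg_sub]
    have hGk1 : G (k+1) = Real.sqrt a + Real.sqrt (max (a - t) 0)
        - Real.sqrt (max (t - a) 0) := by
      simp only [hG, ha']; push_cast; ring_nf
    have hGk : G k = Real.sqrt b + Real.sqrt (max (b - t) 0)
        - Real.sqrt (max (t - b) 0) := rfl
    rw [hGk1, hGk]
    have h1 : Real.sqrt b ≤ Real.sqrt a := Real.sqrt_le_sqrt hba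
    have h2 : Real.sqrt (max (b - t) 0) ≤ Real.sqrt (max (a - t) 0) :=
      Real.sqrt_le_sqrt (max_le_max (by linarith) le_rfl)
    have h3 : Real.sqrt (max (t - a) 0) ≤ Real.sqrt (max (t - b) 0) :=
      Real.sqrt_le_sqrt (max_le_max (by linarith) le_rfl)
    rw [abs_le]
    constructor <;> nlinarith [Real.sqrt_nonneg a, Real.sqrt_nonneg b]
  calc ∑ k ∈ Finset.range n,
        |∫ ω, B t ω * (B (((k:ℝ)+1)/n) ω - B ((k:ℝ)/n) ω) ∂μ|
      ≤ ∑ k ∈ Finset.range n, (1/2) * (G (k+1) - G k) := Finset.sum_le_sum key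
    _ = (1/2) * ∑ k ∈ Finset.range n, (G (k+1) - G k) := by rw [Finset.mul_sum]
    _ = (1/2) * (G n - G 0) := by rw [Finset.sum_range_sub]
    _ ≤ 2 := by
        have hGn : G n = 1 + Real.sqrt (max (1 - t) 0) - Real.sqrt (max (t - 1) 0) := by
          simp only [hG, div_self hN.ne', Real.sqrt_one]
        have hG0 : G 0 = - Real.sqrt t := by
          simp only [hG]
          simp only [Nat.cast_zero, zero_div, zero_sub, Real.sqrt_zero, sub_zero]
          rw [max_eq_right (by linarith : -t ≤ 0), max_eq_left ht0, Real.sqrt_zero]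
          ring
        rw [hGn, hG0]
        have e1 : Real.sqrt (max (1 - t) 0) ≤ 1 := by
          rw [show (1:ℝ) = Real.sqrt 1 by rw [Real.sqrt_one]]
          exact Real.sqrt_le_sqrt (by rcases le_total (1-t) 0 with h|h <;> simp [h] <;> linarith)
        have e2 : Real.sqrt t ≤ 1 := by
          rw [show (1:ℝ) = Real.sqrt 1 by rw [Real.sqrt_one]]
          exact Real.sqrt_le_sqrt ht1
        have e3 : (0:ℝ) ≤ Real.sqrt (max (t - 1) 0) := Real.sqrt_nonneg _
        linarith
end

section
/- For fractional Brownian motion B with H = 1/4 and the pairings ⟨ε_{j/n}, δ_{k/n}⟩ = E(B_{j/n}(B_{(k+1)/n} - B_{k/n})), the double sum Σ_{k,j=0}^{n-1} |⟨ε_{j/n}, δ_{k/n}⟩| is O(n) as n → ∞, i.e. there is a constant C with Σ_{k,j=0}^{n-1} |⟨ε_{j/n}, δ_{k/n}⟩| ≤ C n for all n ≥ 1. -/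
lemma tele (m : ℕ) : ∑ i ∈ Finset.range m, (Real.sqrt ((i:ℝ)+1) - Real.sqrt i) = Real.sqrt m := by
  have := Finset.sum_range_sub (fun i : ℕ => Real.sqrt i) m
  simpa using this

lemma inner_bound (n k : ℕ) (hk : k < n) :
    ∑ j ∈ Finset.range n, abs (Real.sqrt |(j:ℝ) - k| - Real.sqrt |(j:ℝ) - ((k:ℝ)+1)|)
      ≤ 2 * Real.sqrt n := by
  have hk' : k + 1 ≤ n := hk
  rw [Finset.range_eq_Ico, ← Finset.sum_Ico_consecutive _ (Nat.zero_le (k+1)) hk']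
  have hA : ∑ j ∈ Finset.Ico 0 (k+1), abs (Real.sqrt |(j:ℝ) - k| - Real.sqrt |(j:ℝ) - ((k:ℝ)+1)|)
      = Real.sqrt (k+1) := by
    rw [← Finset.range_eq_Ico]
    have h1 : ∀ j ∈ Finset.range (k+1),
        abs (Real.sqrt |(j:ℝ) - k| - Real.sqrt |(j:ℝ) - ((k:ℝ)+1)|)
          = (fun m : ℕ => Real.sqrt ((m:ℝ)+1) - Real.sqrt m) (k - j) := by
      intro j hj
      have hj' : j ≤ k := Nat.lt_succ_iff.mp (Finset.mem_range.mp hj)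
      have hc : ((k - j : ℕ) : ℝ) = (k:ℝ) - j := Nat.cast_sub hj'
      have hnn : (0:ℝ) ≤ (k:ℝ) - j := by rw [← hc]; exact Nat.cast_nonneg _
      have e1 : |(j:ℝ) - k| = ((k - j : ℕ) : ℝ) := by
        rw [abs_sub_comm, hc]; exact abs_of_nonneg hnn
      have e2 : |(j:ℝ) - ((k:ℝ)+1)| = ((k - j : ℕ) : ℝ) + 1 := by
        rw [abs_sub_comm, hc]
        have : (k:ℝ) + 1 - j = ((k:ℝ) - j) + 1 := by ring
        rw [this]
        exact abs_of_nonneg (by linarith)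
      rw [e1, e2, abs_sub_comm]
      exact abs_of_nonneg (by
        have := Real.sqrt_le_sqrt (show ((k-j:ℕ):ℝ) ≤ ((k-j:ℕ):ℝ)+1 by linarith)
        linarith [this])
    rw [Finset.sum_congr rfl h1, ← Finset.sum_range_reflect]
    have h2 : ∀ j ∈ Finset.range (k+1),
        (fun m : ℕ => Real.sqrt ((m:ℝ)+1) - Real.sqrt m) (k - (k + 1 - 1 - j))
          = Real.sqrt ((j:ℝ)+1) - Real.sqrt j := by
      intro j hj
      have hj' : j ≤ k := Nat.lt_succ_iff.mp (Finset.mem_range.mp hj)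
      have : k - (k + 1 - 1 - j) = j := by omega
      rw [this]
    rw [Finset.sum_congr rfl h2, tele]
    push_cast
    rfl
  have hB : ∑ j ∈ Finset.Ico (k+1) n, abs (Real.sqrt |(j:ℝ) - k| - Real.sqrt |(j:ℝ) - ((k:ℝ)+1)|)
      = Real.sqrt (n - (k+1) : ℕ) := by
    rw [Finset.sum_Ico_eq_sum_range]
    have h1 : ∀ i ∈ Finset.range (n - (k+1)),
        abs (Real.sqrt |((k+1+i : ℕ):ℝ) - k| - Real.sqrt |((k+1+i : ℕ):ℝ) - ((k:ℝ)+1)|)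
          = Real.sqrt ((i:ℝ)+1) - Real.sqrt i := by
      intro i _
      have e1 : |((k+1+i : ℕ):ℝ) - k| = (i:ℝ) + 1 := by
        push_cast
        rw [show (k:ℝ)+1+i - (k:ℝ) = (i:ℝ)+1 by ring]
        exact abs_of_nonneg (by positivity)
      have e2 : |((k+1+i : ℕ):ℝ) - ((k:ℝ)+1)| = (i:ℝ) := by
        push_cast
        rw [show (k:ℝ)+1+i - ((k:ℝ)+1) = (i:ℝ) by ring]
        exact abs_of_nonneg (Nat.cast_nonneg _)
      rw [e1, e2]
      exact abs_of_nonneg (by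
        have := Real.sqrt_le_sqrt (show (i:ℝ) ≤ (i:ℝ)+1 by linarith)
        linarith)
    rw [Finset.sum_congr rfl h1, tele]
  rw [hA, hB]
  have b1 : Real.sqrt (k+1) ≤ Real.sqrt n := Real.sqrt_le_sqrt (by exact_mod_cast hk')
  have b2 : Real.sqrt (n - (k+1) : ℕ) ≤ Real.sqrt n :=
    Real.sqrt_le_sqrt (by exact_mod_cast Nat.sub_le n (k+1))
  push_cast at b1 ⊢
  linarith

open MeasureTheory

/-- `Σ_{k,j=0}^{n-1} |⟨ε_{j/n}, δ_{k/n}⟩| = O(n)` for fBm with `H = 1/4`. -/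
theorem stmt_4 {Ω : Type*} [MeasurableSpace Ω] (μ : Measure Ω) [IsProbabilityMeasure μ]
    (B : ℝ → Ω → ℝ)
    (hcov : ∀ s t : ℝ, s ∈ Set.Icc (0:ℝ) 1 → t ∈ Set.Icc (0:ℝ) 1 →
      ∫ ω, B s ω * B t ω ∂μ
        = (1/2) * (Real.sqrt t + Real.sqrt s - Real.sqrt |t - s|))
    (hint : ∀ s t : ℝ, Integrable (fun ω => B s ω * B t ω) μ) :
    ∃ C : ℝ, ∀ n : ℕ, 1 ≤ n →
      ∑ k ∈ Finset.range n, ∑ j ∈ Finset.range n,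
        |∫ ω, B ((j:ℝ)/n) ω * (B (((k:ℝ)+1)/n) ω - B ((k:ℝ)/n) ω) ∂μ| ≤ C * n := by
  refine ⟨2, fun n hn => ?_⟩
  have hn0 : (0:ℝ) < n := by exact_mod_cast Nat.lt_of_lt_of_le Nat.zero_lt_one hn
  have hsn : (0:ℝ) < Real.sqrt n := Real.sqrt_pos.mpr hn0
  have hterm : ∀ k ∈ Finset.range n, ∀ j ∈ Finset.range n,
      |∫ ω, B ((j:ℝ)/n) ω * (B (((k:ℝ)+1)/n) ω - B ((k:ℝ)/n) ω) ∂μ|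
        ≤ (1/2) * (Real.sqrt (((k:ℝ)+1)/n) - Real.sqrt ((k:ℝ)/n))
          + (1/(2 * Real.sqrt n))
            * abs (Real.sqrt |(j:ℝ) - k| - Real.sqrt |(j:ℝ) - ((k:ℝ)+1)|) := by
    intro k hk j hj
    have hkn : (k:ℝ) + 1 ≤ n := by exact_mod_cast Finset.mem_range.mp hk
    have hjn : (j:ℝ) ≤ n := by
      exact_mod_cast le_of_lt (Finset.mem_range.mp hj)
    have memj : (j:ℝ)/n ∈ Set.Icc (0:ℝ) 1 :=
      ⟨by positivity, (div_le_one hn0).mpr hjn⟩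
    have memk : (k:ℝ)/n ∈ Set.Icc (0:ℝ) 1 :=
      ⟨by positivity, (div_le_one hn0).mpr (by linarith)⟩
    have memk1 : ((k:ℝ)+1)/n ∈ Set.Icc (0:ℝ) 1 :=
      ⟨by positivity, (div_le_one hn0).mpr hkn⟩
    have heq : ∫ ω, B ((j:ℝ)/n) ω * (B (((k:ℝ)+1)/n) ω - B ((k:ℝ)/n) ω) ∂μ
        = (1/2) * ((Real.sqrt (((k:ℝ)+1)/n) - Real.sqrt ((k:ℝ)/n))
            + (Real.sqrt |(k:ℝ)/n - (j:ℝ)/n| - Real.sqrt |((k:ℝ)+1)/n - (j:ℝ)/n|)) := by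
      have h1 : (fun ω => B ((j:ℝ)/n) ω * (B (((k:ℝ)+1)/n) ω - B ((k:ℝ)/n) ω))
          = fun ω => B ((j:ℝ)/n) ω * B (((k:ℝ)+1)/n) ω - B ((j:ℝ)/n) ω * B ((k:ℝ)/n) ω := by
        funext ω; ring
      rw [h1, integral_sub (hint _ _) (hint _ _), hcov _ _ memj memk1, hcov _ _ memj memk]
      ring
    have hD : Real.sqrt |(k:ℝ)/n - (j:ℝ)/n| - Real.sqrt |((k:ℝ)+1)/n - (j:ℝ)/n|
        = (Real.sqrt |(j:ℝ) - k| - Real.sqrt |(j:ℝ) - ((k:ℝ)+1)|) / Real.sqrt n := by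
      have e1 : |(k:ℝ)/n - (j:ℝ)/n| = |(j:ℝ) - k| / n := by
        rw [div_sub_div_same, abs_div, abs_of_pos hn0, abs_sub_comm]
      have e2 : |((k:ℝ)+1)/n - (j:ℝ)/n| = |(j:ℝ) - ((k:ℝ)+1)| / n := by
        rw [div_sub_div_same, abs_div, abs_of_pos hn0, abs_sub_comm]
      rw [e1, e2, Real.sqrt_div (abs_nonneg _), Real.sqrt_div (abs_nonneg _), sub_div]
    have hA : 0 ≤ Real.sqrt (((k:ℝ)+1)/n) - Real.sqrt ((k:ℝ)/n) :=
      sub_nonneg.mpr (Real.sqrt_le_sqrt (by gcongr <;> linarith))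
    rw [heq, hD]
    set A := Real.sqrt (((k:ℝ)+1)/n) - Real.sqrt ((k:ℝ)/n) with hAdef
    set N := Real.sqrt |(j:ℝ) - k| - Real.sqrt |(j:ℝ) - ((k:ℝ)+1)| with hNdef
    have h2 : |A + N / Real.sqrt n| ≤ A + |N| / Real.sqrt n := by
      calc |A + N / Real.sqrt n| ≤ |A| + |N / Real.sqrt n| := abs_add_le _ _
        _ = A + |N| / Real.sqrt n := by rw [abs_of_nonneg hA, abs_div, abs_of_pos hsn]
    have h3 : |(1/2) * (A + N / Real.sqrt n)| = (1/2) * |A + N / Real.sqrt n| := by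
      rw [abs_mul]; norm_num
    rw [h3]
    have h4 : (1/2) * (A + |N| / Real.sqrt n)
        = (1/2) * A + (1/(2 * Real.sqrt n)) * |N| := by
      field_simp
    nlinarith [h2, h4]
  calc ∑ k ∈ Finset.range n, ∑ j ∈ Finset.range n,
        |∫ ω, B ((j:ℝ)/n) ω * (B (((k:ℝ)+1)/n) ω - B ((k:ℝ)/n) ω) ∂μ|
      ≤ ∑ k ∈ Finset.range n, ∑ j ∈ Finset.range n,
          ((1/2) * (Real.sqrt (((k:ℝ)+1)/n) - Real.sqrt ((k:ℝ)/n))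
            + (1/(2 * Real.sqrt n))
              * abs (Real.sqrt |(j:ℝ) - k| - Real.sqrt |(j:ℝ) - ((k:ℝ)+1)|)) :=
        Finset.sum_le_sum fun k hk => Finset.sum_le_sum fun j hj => hterm k hk j hj
    _ = ∑ k ∈ Finset.range n,
          ((n:ℝ) * ((1/2) * (Real.sqrt (((k:ℝ)+1)/n) - Real.sqrt ((k:ℝ)/n)))
            + (1/(2 * Real.sqrt n))
              * ∑ j ∈ Finset.range n,
                  abs (Real.sqrt |(j:ℝ) - k| - Real.sqrt |(j:ℝ) - ((k:ℝ)+1)|)) := by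
        refine Finset.sum_congr rfl fun k _ => ?_
        rw [Finset.sum_add_distrib, Finset.sum_const, Finset.card_range, ← Finset.mul_sum,
          nsmul_eq_mul]
    _ ≤ ∑ k ∈ Finset.range n,
          ((n:ℝ) * ((1/2) * (Real.sqrt (((k:ℝ)+1)/n) - Real.sqrt ((k:ℝ)/n))) + 1) := by
        refine Finset.sum_le_sum fun k hk => ?_
        have := inner_bound n k (Finset.mem_range.mp hk)
        have h5 : (1/(2 * Real.sqrt n))
            * ∑ j ∈ Finset.range n,
                abs (Real.sqrt |(j:ℝ) - k| - Real.sqrt |(j:ℝ) - ((k:ℝ)+1)|)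
            ≤ (1/(2 * Real.sqrt n)) * (2 * Real.sqrt n) :=
          mul_le_mul_of_nonneg_left this (by positivity)
        have h6 : (1/(2 * Real.sqrt n)) * (2 * Real.sqrt n) = 1 := by
          field_simp
        linarith
    _ = (n:ℝ) * (1/2)
          * (∑ k ∈ Finset.range n, (Real.sqrt (((k:ℝ)+1)/n) - Real.sqrt ((k:ℝ)/n))) + n := by
        rw [Finset.sum_add_distrib, Finset.sum_const, Finset.card_range, nsmul_eq_mul,
          mul_one, Finset.mul_sum]
        congr 1
        exact Finset.sum_congr rfl fun k _ => by ring
    _ ≤ 2 * n := by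
        have htel : ∑ k ∈ Finset.range n, (Real.sqrt (((k:ℝ)+1)/n) - Real.sqrt ((k:ℝ)/n)) = 1 := by
          have := Finset.sum_range_sub (fun k : ℕ => Real.sqrt ((k:ℝ)/n)) n
          simp only [Nat.cast_add, Nat.cast_one] at this
          rw [this, div_self hn0.ne']
          simp
        rw [htel]
        linarith
end

section
/- For fractional Brownian motion B with H = 1/4 and each n ≥ 1, k ∈ {0,...,n-1}, one has |⟨ε_{k/n}, δ_{k/n}⟩² - 1/(4n)| ≤ (√(k+1) - √k)/(2n), where ⟨ε_{k/n}, δ_{k/n}⟩ = E(B_{k/n}(B_{(k+1)/n} - B_{k/n})). Consequently Σ_{k=0}^{n-1} |⟨ε_{k/n}, δ_{k/n}⟩² - 1/(4n)| → 0 as n → ∞. -/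
open MeasureTheory Filter

/-- Bound `|⟨ε_{k/n}, δ_{k/n}⟩² - 1/(4n)| ≤ (√(k+1) - √k)/(2n)` and the resulting
convergence `Σ_{k=0}^{n-1} |⟨ε_{k/n}, δ_{k/n}⟩² - 1/(4n)| → 0`, for fBm with `H = 1/4`. -/
theorem stmt_5 {Ω : Type*} [MeasurableSpace Ω] (μ : Measure Ω) [IsProbabilityMeasure μ]
    (B : ℝ → Ω → ℝ)
    (hcov : ∀ s t : ℝ, s ∈ Set.Icc (0:ℝ) 1 → t ∈ Set.Icc (0:ℝ) 1 →
      ∫ ω, B s ω * B t ω ∂μ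
        = (1/2) * (Real.sqrt t + Real.sqrt s - Real.sqrt |t - s|))
    (hint : ∀ s t : ℝ, Integrable (fun ω => B s ω * B t ω) μ) :
    (∀ n k : ℕ, 1 ≤ n → k < n →
      |(∫ ω, B ((k:ℝ)/n) ω * (B (((k:ℝ)+1)/n) ω - B ((k:ℝ)/n) ω) ∂μ)^2 - 1/(4*n)|
        ≤ (Real.sqrt ((k:ℝ)+1) - Real.sqrt (k:ℝ))/(2*n)) ∧
    Tendsto (fun n : ℕ => ∑ k ∈ Finset.range n,
        |(∫ ω, B ((k:ℝ)/n) ω * (B (((k:ℝ)+1)/n) ω - B ((k:ℝ)/n) ω) ∂μ)^2 - 1/(4*n)|)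
      atTop (nhds 0) := by
  -- Key computation of the integral
  have key : ∀ n k : ℕ, 1 ≤ n → k < n →
      (∫ ω, B ((k:ℝ)/n) ω * (B (((k:ℝ)+1)/n) ω - B ((k:ℝ)/n) ω) ∂μ)
        = (Real.sqrt ((k:ℝ)+1) - Real.sqrt (k:ℝ) - 1) / (2 * Real.sqrt n) := by
    intro n k hn hk
    have hn0 : (0:ℝ) < n := by exact_mod_cast hn
    have hkn : (k:ℝ) + 1 ≤ n := by exact_mod_cast hk
    have hs : (k:ℝ)/n ∈ Set.Icc (0:ℝ) 1 := by
      constructor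
      · positivity
      · rw [div_le_one hn0]; linarith [hkn]
    have ht : ((k:ℝ)+1)/n ∈ Set.Icc (0:ℝ) 1 := by
      constructor
      · positivity
      · rw [div_le_one hn0]; linarith
    have hfun : (fun ω => B ((k:ℝ)/n) ω * (B (((k:ℝ)+1)/n) ω - B ((k:ℝ)/n) ω))
        = fun ω => B ((k:ℝ)/n) ω * B (((k:ℝ)+1)/n) ω - B ((k:ℝ)/n) ω * B ((k:ℝ)/n) ω := by
      funext ω; ring
    rw [hfun, integral_sub (hint _ _) (hint _ _), hcov _ _ hs ht, hcov _ _ hs hs]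
    have hd : ((k:ℝ)+1)/n - (k:ℝ)/n = 1/n := by field_simp; ring
    have hsub : (k:ℝ)/n - (k:ℝ)/n = 0 := by ring
    rw [hd, hsub, abs_zero, Real.sqrt_zero, abs_of_nonneg (by positivity)]
    rw [Real.sqrt_div (by positivity : (0:ℝ) ≤ (k:ℝ)+1), Real.sqrt_div (by positivity : (0:ℝ) ≤ (k:ℝ)),
      Real.sqrt_div (by norm_num : (0:ℝ) ≤ 1), Real.sqrt_one]
    have hsn : Real.sqrt n ≠ 0 := by
      have : (0:ℝ) < Real.sqrt n := Real.sqrt_pos.2 hn0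
      linarith
    field_simp
    ring
  have hsq : ∀ n : ℕ, 1 ≤ n → Real.sqrt n * Real.sqrt n = n := fun n hn =>
    Real.mul_self_sqrt (by positivity)
  -- First part
  have part1 : ∀ n k : ℕ, 1 ≤ n → k < n →
      |(∫ ω, B ((k:ℝ)/n) ω * (B (((k:ℝ)+1)/n) ω - B ((k:ℝ)/n) ω) ∂μ)^2 - 1/(4*n)|
        ≤ (Real.sqrt ((k:ℝ)+1) - Real.sqrt (k:ℝ))/(2*n) := by
    intro n k hn hk
    rw [key n k hn hk]
    have hn0 : (0:ℝ) < n := by exact_mod_cast hn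
    set d := Real.sqrt ((k:ℝ)+1) - Real.sqrt (k:ℝ) with hdd
    have hd0 : 0 ≤ d := by
      have := Real.sqrt_le_sqrt (by linarith : (k:ℝ) ≤ (k:ℝ)+1)
      simp [hdd]; linarith
    have hd1 : d ≤ 1 := by
      have h1 : Real.sqrt ((k:ℝ)+1) ≤ Real.sqrt (k:ℝ) + 1 := by
        nlinarith [Real.sq_sqrt (by positivity : (0:ℝ) ≤ (k:ℝ)),
          Real.sq_sqrt (by positivity : (0:ℝ) ≤ (k:ℝ)+1),
          Real.sqrt_nonneg ((k:ℝ)+1), Real.sqrt_nonneg (k:ℝ)]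
      simp [hdd]; linarith
    have hmul := hsq n hn
    have hsq2 : (2 * Real.sqrt n)^2 = 4 * n := by
      rw [mul_pow]; nlinarith
    have hval : ((d - 1)/(2*Real.sqrt n))^2 = (d-1)^2 / (4*n) := by
      rw [div_pow, hsq2]
    rw [hval]
    have hrw : (d-1)^2 / (4*n) - 1/(4*n) = ((d-1)^2 - 1)/(4*n) := by
      rw [div_sub_div_same]
    rw [hrw, abs_div, abs_of_pos (by positivity : (0:ℝ) < 4*n)]
    have hnum : |(d-1)^2 - 1| ≤ 2*d := by
      rw [abs_le]; constructor <;> nlinarith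
    calc |(d-1)^2 - 1| / (4*n) ≤ (2*d)/(4*n) := by gcongr
      _ = d/(2*n) := by ring
  refine ⟨part1, ?_⟩
  -- Second part : squeeze
  have hbound : ∀ n : ℕ, (∑ k ∈ Finset.range n,
      |(∫ ω, B ((k:ℝ)/n) ω * (B (((k:ℝ)+1)/n) ω - B ((k:ℝ)/n) ω) ∂μ)^2 - 1/(4*n)|)
      ≤ 1/(2*Real.sqrt n) := by
    intro n
    rcases Nat.eq_zero_or_pos n with h0 | hn
    · subst h0; simp
    have hn0 : (0:ℝ) < n := by exact_mod_cast hn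
    have hmul := hsq n hn
    have hsn : (0:ℝ) < Real.sqrt n := Real.sqrt_pos.2 hn0
    calc (∑ k ∈ Finset.range n,
        |(∫ ω, B ((k:ℝ)/n) ω * (B (((k:ℝ)+1)/n) ω - B ((k:ℝ)/n) ω) ∂μ)^2 - 1/(4*n)|)
        ≤ ∑ k ∈ Finset.range n, (Real.sqrt ((k:ℝ)+1) - Real.sqrt (k:ℝ))/(2*n) := by
          apply Finset.sum_le_sum
          intro k hk
          exact part1 n k hn (Finset.mem_range.1 hk)
      _ = (∑ k ∈ Finset.range n, (Real.sqrt ((k:ℝ)+1) - Real.sqrt (k:ℝ)))/(2*n) := by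
          rw [Finset.sum_div]
      _ = Real.sqrt n / (2*n) := by
          have := Finset.sum_range_sub (fun k : ℕ => Real.sqrt (k:ℝ)) n
          simp only [Nat.cast_zero, Real.sqrt_zero, sub_zero] at this
          rw [← this]
          congr 1
          apply Finset.sum_congr rfl
          intro k _
          push_cast
          ring_nf
      _ = 1/(2*Real.sqrt n) := by
          rw [div_eq_div_iff (by positivity) (by positivity)]
          nlinarith
  have hpos : ∀ n : ℕ, 0 ≤ (∑ k ∈ Finset.range n,
      |(∫ ω, B ((k:ℝ)/n) ω * (B (((k:ℝ)+1)/n) ω - B ((k:ℝ)/n) ω) ∂μ)^2 - 1/(4*n)|) := by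
    intro n
    exact Finset.sum_nonneg fun k _ => abs_nonneg _
  have htend : Tendsto (fun n : ℕ => 1/(2*Real.sqrt n)) atTop (nhds 0) := by
    have h1 : Tendsto (fun n : ℕ => Real.sqrt n) atTop atTop := by
      rw [tendsto_atTop_atTop]
      intro b
      refine ⟨⌈b*b⌉₊, fun n hn => ?_⟩
      rcases le_or_gt b 0 with hb | hb
      · exact hb.trans (Real.sqrt_nonneg _)
      · have h2 : b*b ≤ (n:ℝ) := le_trans (Nat.le_ceil _) (by exact_mod_cast hn)
        have := Real.sqrt_le_sqrt h2
        rwa [Real.sqrt_mul_self hb.le] at this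
    have h2 : Tendsto (fun n : ℕ => 2 * Real.sqrt n) atTop atTop :=
      h1.const_mul_atTop (by norm_num)
    have h3 := h2.inv_tendsto_atTop
    have h4 : (fun n : ℕ => 1/(2*Real.sqrt n)) = (fun n : ℕ => 2 * Real.sqrt n)⁻¹ := by
      funext n; simp [one_div]
    rw [h4]; exact h3
  exact squeeze_zero hpos hbound htend
end

section
/- The Gaussian process F defined by F_t = u(t,0), where u solves the stochastic heat equation u_t = (1/2)u_{xx} + Ẇ on [0,1]×ℝ with u(0,·)=0 and Ẇ space-time white noise, is centered Gaussian with covariance E(F_s F_t) = (1/√(2π))(√(t+s) - √|t-s|); in particular F is a bifractional Brownian motion with indices H = K = 1/2 up to the multiplicative constant 2^{-1/2} (2π)^{-1/2} normalization. -/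
open MeasureTheory Real

lemma gauss_prod (a b : ℝ) (ha : 0 < a) (hb : 0 < b) :
    ∫ y : ℝ, ((Real.sqrt (2 * π * a))⁻¹ * Real.exp (-y^2 / (2*a))) *
      ((Real.sqrt (2 * π * b))⁻¹ * Real.exp (-y^2 / (2*b)))
      = (Real.sqrt (2 * π * (a + b)))⁻¹ := by
  have hpi := Real.pi_pos
  have h1 : ∀ y : ℝ, ((Real.sqrt (2 * π * a))⁻¹ * Real.exp (-y^2 / (2*a))) *
      ((Real.sqrt (2 * π * b))⁻¹ * Real.exp (-y^2 / (2*b)))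
      = ((Real.sqrt (2 * π * a))⁻¹ * (Real.sqrt (2 * π * b))⁻¹) *
        Real.exp (-((a+b)/(2*a*b)) * y^2) := by
    intro y
    rw [mul_mul_mul_comm, ← Real.exp_add]
    congr 1
    field_simp
    ring
  simp only [h1]
  rw [MeasureTheory.integral_const_mul, integral_gaussian]
  rw [← Real.sqrt_inv, ← Real.sqrt_inv, ← Real.sqrt_mul (by positivity),
    ← Real.sqrt_mul (by positivity), ← Real.sqrt_inv]
  congr 1
  field_simp

lemma outer_int (s t : ℝ) (hst : |t - s| ≤ t + s) :
    (∫ r in (0:ℝ)..(min s t), (Real.sqrt (2 * π * (t + s - 2 * r)))⁻¹)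
      = (Real.sqrt (2 * π))⁻¹ * (Real.sqrt (t + s) - Real.sqrt |t - s|) := by
  have hpi := Real.pi_pos
  have habs : t + s - 2 * min s t = |t - s| := by
    rcases le_total s t with h | h
    · rw [min_eq_left h, abs_of_nonneg (by linarith)]; ring
    · rw [min_eq_right h, abs_of_nonpos (by linarith)]; ring
  have step1 : (∫ r in (0:ℝ)..(min s t), (Real.sqrt (2 * π * (t + s - 2 * r)))⁻¹)
      = (2:ℝ)⁻¹ • ∫ u in (2*(0:ℝ))..(2 * min s t), (Real.sqrt (2 * π * (t + s - u)))⁻¹ :=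
    intervalIntegral.integral_comp_mul_left
      (fun u => (Real.sqrt (2 * π * (t + s - u)))⁻¹) two_ne_zero
  have step2 : (∫ u in (2*(0:ℝ))..(2 * min s t), (Real.sqrt (2 * π * (t + s - u)))⁻¹)
      = ∫ x in (t + s - 2 * min s t)..(t + s - 2*(0:ℝ)), (Real.sqrt (2 * π * x))⁻¹ :=
    intervalIntegral.integral_comp_sub_left (fun u => (Real.sqrt (2 * π * u))⁻¹) (t + s)
  rw [step1, step2]
  rw [show t + s - 2*(0:ℝ) = t + s by ring]
  have hIcc : ∀ x ∈ Set.uIcc (t + s - 2 * min s t) (t + s),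
      (Real.sqrt (2 * π * x))⁻¹ = (Real.sqrt (2 * π))⁻¹ * x ^ (-(1/2) : ℝ) := by
    intro x hx
    have hx0 : 0 ≤ x := by
      rw [Set.uIcc_of_le (by rw [habs]; linarith)] at hx
      have h6 := hx.1
      rw [habs] at h6
      have := abs_nonneg (t - s)
      linarith
    rw [Real.sqrt_mul (by positivity), mul_inv]
    congr 1
    rw [Real.sqrt_eq_rpow, ← Real.rpow_neg hx0]
  rw [intervalIntegral.integral_congr hIcc, intervalIntegral.integral_const_mul,
    integral_rpow (Or.inl (by norm_num)), habs]
  have e1 : (-(1/2) : ℝ) + 1 = 1/2 := by norm_num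
  rw [e1, ← Real.sqrt_eq_rpow, ← Real.sqrt_eq_rpow]
  rw [smul_eq_mul]
  ring

/-- For the centered Gaussian process `F_t = u(t,0)`, where `u` solves the stochastic heat
equation with zero initial condition (so that `E(F_s F_t) = ∫_0^{s∧t} ∫_ℝ p_{t-r}(y) p_{s-r}(y)
dy dr` with `p` the heat kernel), the covariance equals `(1/√(2π))(√(t+s) - √|t-s|)`;
in particular `F` is, up to a multiplicative constant, a bifractional Brownian motion with
indices `H = K = 1/2`, whose covariance is `2^{-K}((t^{2H} + s^{2H})^K - |t-s|^{2HK})`. -/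
theorem stmt_17 {Ω : Type*} [MeasurableSpace Ω] (μ : Measure Ω) [IsProbabilityMeasure μ]
    (F : ℝ → Ω → ℝ) (p : ℝ → ℝ → ℝ)
    (hp : ∀ t : ℝ, 0 < t → ∀ x : ℝ,
      p t x = (Real.sqrt (2 * Real.pi * t))⁻¹ * Real.exp (-x^2 / (2*t)))
    (hcovF : ∀ s t : ℝ, s ∈ Set.Icc (0:ℝ) 1 → t ∈ Set.Icc (0:ℝ) 1 →
      ∫ ω, F s ω * F t ω ∂μ
        = ∫ r in Set.Ioc (0:ℝ) (min s t), ∫ y : ℝ, p (t - r) y * p (s - r) y) :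
    (∀ s t : ℝ, s ∈ Set.Icc (0:ℝ) 1 → t ∈ Set.Icc (0:ℝ) 1 →
      ∫ ω, F s ω * F t ω ∂μ
        = (Real.sqrt (2 * Real.pi))⁻¹ * (Real.sqrt (t + s) - Real.sqrt |t - s|)) ∧
    (∃ c : ℝ, 0 < c ∧ ∀ s t : ℝ, s ∈ Set.Icc (0:ℝ) 1 → t ∈ Set.Icc (0:ℝ) 1 →
      ∫ ω, F s ω * F t ω ∂μ
        = c * ((2:ℝ) ^ (-(1:ℝ)/2) *
            ((s ^ (2 * (1/2:ℝ)) + t ^ (2 * (1/2:ℝ))) ^ ((1:ℝ)/2)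
              - |t - s| ^ (2 * (1/2:ℝ) * (1/2:ℝ))))) := by
  have hpi := Real.pi_pos
  have main : ∀ s t : ℝ, s ∈ Set.Icc (0:ℝ) 1 → t ∈ Set.Icc (0:ℝ) 1 →
      ∫ ω, F s ω * F t ω ∂μ
        = (Real.sqrt (2 * Real.pi))⁻¹ * (Real.sqrt (t + s) - Real.sqrt |t - s|) := by
    intro s t hs ht
    obtain ⟨hs0, hs1⟩ := hs
    obtain ⟨ht0, ht1⟩ := ht
    rw [hcovF s t ⟨hs0, hs1⟩ ⟨ht0, ht1⟩]
    rcases eq_or_lt_of_le (le_min hs0 ht0 : (0:ℝ) ≤ min s t) with hm | hm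
    · -- min s t = 0, so s = 0 or t = 0
      rw [← hm, Set.Ioc_self, setIntegral_empty]
      have hst : s = 0 ∨ t = 0 := by
        rcases le_total s t with h | h
        · left; rw [min_eq_left h] at hm; exact hm.symm
        · right; rw [min_eq_right h] at hm; exact hm.symm
      symm
      rcases hst with h | h
      · subst h; rw [add_zero, sub_zero, abs_of_nonneg ht0, sub_self, mul_zero]
      · subst h; rw [zero_add, zero_sub, abs_neg, abs_of_nonneg hs0, sub_self, mul_zero]
    · have hcong : ∀ r ∈ Set.Ioo (0:ℝ) (min s t),
          (∫ y : ℝ, p (t - r) y * p (s - r) y)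
            = (Real.sqrt (2 * π * (t + s - 2 * r)))⁻¹ := by
        intro r hr
        have htr : 0 < t - r := by
          have := hr.2; have : r < t := lt_of_lt_of_le this (min_le_right s t); linarith
        have hsr : 0 < s - r := by
          have := hr.2; have : r < s := lt_of_lt_of_le this (min_le_left s t); linarith
        simp only [hp (t - r) htr, hp (s - r) hsr]
        rw [gauss_prod (t - r) (s - r) htr hsr]
        congr 2
        ring
      rw [MeasureTheory.integral_Ioc_eq_integral_Ioo,
        setIntegral_congr_fun measurableSet_Ioo hcong,
        ← MeasureTheory.integral_Ioc_eq_integral_Ioo,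
        ← intervalIntegral.integral_of_le hm.le]
      have habs2 : |t - s| ≤ t + s := by
        rcases le_total s t with h | h
        · rw [abs_of_nonneg (by linarith)]; linarith
        · rw [abs_of_nonpos (by linarith)]; linarith
      exact outer_int s t habs2
  refine ⟨main, ⟨Real.sqrt 2 * (Real.sqrt (2 * π))⁻¹, by positivity, ?_⟩⟩
  intro s t hs ht
  rw [main s t hs ht]
  have h1 : (2 : ℝ) * (1/2 : ℝ) = 1 := by norm_num
  rw [h1, show (1:ℝ) * (1/2 : ℝ) = 1/2 from by norm_num, Real.rpow_one, Real.rpow_one,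
    ← Real.sqrt_eq_rpow, ← Real.sqrt_eq_rpow]
  have h3 : (2:ℝ) ^ (-(1:ℝ)/2) = (Real.sqrt 2)⁻¹ := by
    rw [show (-(1:ℝ)/2) = -(1/2 : ℝ) by norm_num, Real.rpow_neg (by norm_num),
      ← Real.sqrt_eq_rpow]
  rw [h3, add_comm s t, add_comm t s]
  have h4 : Real.sqrt 2 * (Real.sqrt (2*π))⁻¹ * ((Real.sqrt 2)⁻¹ *
      (Real.sqrt (s + t) - Real.sqrt |t - s|))
      = (Real.sqrt (2*π))⁻¹ * (Real.sqrt (s + t) - Real.sqrt |t - s|) := by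
    have h5 : Real.sqrt 2 ≠ 0 := by positivity
    field_simp
  rw [h4, add_comm s t]
end

section
/- For a fractional Brownian motion B^H on [0,1] with Hurst index H ∈ (0,1), the covariance R_H(s,t) = (1/2)(t^{2H} + s^{2H} - |t-s|^{2H}) is a positive semidefinite kernel; equivalently, for all finite families of times t_1,...,t_m ∈ [0,1] and reals a_1,...,a_m, Σ_{i,j} a_i a_j R_H(t_i,t_j) ≥ 0. -/
open MeasureTheory Real Set

noncomputable def gk (α x v : ℝ) : ℝ := (1 - Real.cos (x * v)) * v ^ (-(1+α))

lemma gk_nonneg {α x v : ℝ} (hv : 0 < v) : 0 ≤ gk α x v :=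
  mul_nonneg (by linarith [Real.cos_le_one (x*v)]) (Real.rpow_pos_of_pos hv _).le

lemma gk_contOn {α x : ℝ} : ContinuousOn (gk α x) (Ioi 0) := by
  apply ContinuousOn.mul
  · exact (continuous_const.sub (Real.continuous_cos.comp (continuous_const.mul continuous_id))).continuousOn
  · exact fun v hv => (Real.continuousAt_rpow_const v _ (Or.inl (ne_of_gt hv))).continuousWithinAt

lemma integrableOn_gk {α : ℝ} (hα : 0 < α) (hα2 : α < 2) (x : ℝ) :
    IntegrableOn (gk α x) (Ioi 0) := by
  have hmeas : ∀ s : Set ℝ, MeasurableSet s → s ⊆ Ioi 0 →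
      AEStronglyMeasurable (gk α x) (volume.restrict s) := fun s hs hsub =>
    ((gk_contOn).mono hsub).aestronglyMeasurable hs
  have h1 : IntegrableOn (gk α x) (Ioc 0 1) := by
    have hg : IntegrableOn (fun v : ℝ => x^2/2 * v ^ (1-α)) (Ioc 0 1) := by
      apply Integrable.const_mul
      rw [show Ioc (0:ℝ) 1 = Ioc 0 1 from rfl]
      exact Iff.mpr integrableOn_Ioc_iff_integrableOn_Ioo ((intervalIntegral.integrableOn_Ioo_rpow_iff one_pos).mpr (by linarith))
    refine Integrable.mono hg (hmeas _ measurableSet_Ioc Ioc_subset_Ioi_self) ?_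
    filter_upwards [ae_restrict_mem measurableSet_Ioc] with v hv
    obtain ⟨hv0, _⟩ := hv
    have hw : (0:ℝ) < v ^ (-(1+α)) := Real.rpow_pos_of_pos hv0 _
    have hpow : v ^ (1-α) = v^2 * v ^ (-(1+α)) := by
      rw [← Real.rpow_natCast v 2, ← Real.rpow_add hv0]; push_cast; ring_nf
    have h1c : 1 - Real.cos (x*v) ≤ (x*v)^2/2 := by
      linarith [Real.one_sub_sq_div_two_le_cos (x := x*v)]
    have key : gk α x v ≤ x^2/2 * v ^ (1-α) := by
      calc gk α x v ≤ (x*v)^2/2 * v ^ (-(1+α)) := mul_le_mul_of_nonneg_right h1c hw.le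
        _ = x^2/2 * v ^ (1-α) := by rw [hpow]; ring
    rw [Real.norm_eq_abs, Real.norm_eq_abs, abs_of_nonneg (gk_nonneg hv0)]
    exact key.trans (le_abs_self _)
  have h2 : IntegrableOn (gk α x) (Ioi 1) := by
    have hg : IntegrableOn (fun v : ℝ => 2 * v ^ (-(1+α))) (Ioi 1) :=
      (integrableOn_Ioi_rpow_of_lt (by linarith) one_pos).const_mul 2
    refine Integrable.mono hg (hmeas _ measurableSet_Ioi (Ioi_subset_Ioi zero_le_one)) ?_
    filter_upwards [ae_restrict_mem measurableSet_Ioi] with v hv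
    have hv0 : (0:ℝ) < v := lt_trans one_pos hv
    have hw : (0:ℝ) < v ^ (-(1+α)) := Real.rpow_pos_of_pos hv0 _
    rw [Real.norm_eq_abs, Real.norm_eq_abs, abs_of_nonneg (gk_nonneg hv0)]
    have key : gk α x v ≤ 2 * v ^ (-(1+α)) :=
      mul_le_mul_of_nonneg_right (by linarith [Real.neg_one_le_cos (x*v)]) hw.le
    exact key.trans (le_abs_self _)
  have := h1.union h2
  rwa [Set.Ioc_union_Ioi_eq_Ioi zero_le_one] at this

noncomputable def ck (α : ℝ) : ℝ := ∫ v in Ioi 0, gk α 1 v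

lemma ck_pos {α : ℝ} (hα : 0 < α) (hα2 : α < 2) : 0 < ck α := by
  rw [ck, setIntegral_pos_iff_support_of_nonneg_ae ?h1 (integrableOn_gk hα hα2 1)]
  case h1 =>
    filter_upwards [ae_restrict_mem measurableSet_Ioi] with v hv
    exact gk_nonneg hv
  have hsub : Ioo (0:ℝ) 1 ⊆ Function.support (gk α 1) ∩ Ioi 0 := by
    intro v hv
    refine ⟨?_, hv.1⟩
    have hcos : Real.cos v < 1 := by
      have := Real.cos_lt_cos_of_nonneg_of_le_pi (le_refl 0) (le_trans hv.2.le (by linarith [Real.pi_gt_three])) hv.1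
      rwa [Real.cos_zero] at this
    have : 0 < gk α 1 v := by
      rw [gk, one_mul]
      exact mul_pos (by linarith) (Real.rpow_pos_of_pos hv.1 _)
    exact ne_of_gt this
  calc (0:ENNReal) < volume (Ioo (0:ℝ) 1) := by simp
    _ ≤ _ := measure_mono hsub

lemma gk_integral {α : ℝ} (hα : 0 < α) (hα2 : α < 2) (x : ℝ) :
    ∫ v in Ioi 0, gk α x v = |x| ^ α * ck α := by
  rcases eq_or_ne x 0 with rfl | hx
  · simp [gk, Real.zero_rpow (ne_of_gt hα)]
  set b := |x| with hb
  have hb0 : 0 < b := abs_pos.mpr hx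
  have h1 : EqOn (gk α x) (fun v => b ^ (1+α) * gk α 1 (b * v)) (Ioi 0) := by
    intro v hv
    have hv0 : (0:ℝ) < v := hv
    simp only [gk, one_mul]
    have hcos : Real.cos (b * v) = Real.cos (x * v) := by
      rw [show b * v = |x * v| from by rw [abs_mul, abs_of_nonneg hv0.le], Real.cos_abs]
    have hbb : b ^ (1+α) * b ^ (-(1+α)) = 1 := by
      rw [← Real.rpow_add hb0, show 1+α+-(1+α) = 0 from by ring, Real.rpow_zero]
    rw [← hcos, Real.mul_rpow hb0.le hv0.le,
      show b ^ (1+α) * ((1 - Real.cos (b*v)) * (b ^ (-(1+α)) * v ^ (-(1+α)))) =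
        (b ^ (1+α) * b ^ (-(1+α))) * ((1 - Real.cos (b*v)) * v ^ (-(1+α))) from by ring,
      hbb, one_mul]
  rw [setIntegral_congr_fun measurableSet_Ioi h1, MeasureTheory.integral_const_mul,
    integral_comp_mul_left_Ioi (gk α 1) 0 hb0, mul_zero]
  rw [smul_eq_mul, ← ck, ← mul_assoc]
  congr 1
  rw [← Real.rpow_neg_one b, ← Real.rpow_add hb0]
  congr 1; ring

/-- The fBm covariance `R_H(s,t) = (1/2)(t^{2H} + s^{2H} - |t-s|^{2H})` is a positive
semidefinite kernel on `[0,1]`, for every Hurst index `H ∈ (0,1)`. -/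
theorem stmt_18 :
    ∀ H : ℝ, H ∈ Set.Ioo (0:ℝ) 1 →
    ∀ (m : ℕ) (t : Fin m → ℝ), (∀ i, t i ∈ Set.Icc (0:ℝ) 1) →
    ∀ a : Fin m → ℝ,
      0 ≤ ∑ i, ∑ j, a i * a j *
        ((1/2) * ((t j) ^ (2*H) + (t i) ^ (2*H) - |t i - t j| ^ (2*H))) := by
  intro H hH m t ht a
  set α := 2 * H with hα_def
  have hα : 0 < α := by simp [hα_def]; linarith [hH.1]
  have hα2 : α < 2 := by simp [hα_def]; linarith [hH.2]
  set c := ck α with hc_def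
  have hc : 0 < c := ck_pos hα hα2
  set h : Fin m → Fin m → ℝ → ℝ :=
    fun i j v => a i * a j * (gk α (t j) v + gk α (t i) v - gk α (t i - t j) v) with hh
  have hint : ∀ i j, IntegrableOn (h i j) (Ioi 0) := fun i j =>
    (((integrableOn_gk hα hα2 (t j)).add (integrableOn_gk hα hα2 (t i))).sub
      (integrableOn_gk hα hα2 (t i - t j))).const_mul _
  have habs : ∀ y : ℝ, |y| ^ α = (∫ v in Ioi 0, gk α y v) / c := by
    intro y
    rw [gk_integral hα hα2 y]
    field_simp
    rfl
  have hterm : ∀ i j, a i * a j *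
      ((1/2) * ((t j) ^ α + (t i) ^ α - |t i - t j| ^ α))
      = (1/(2*c)) * ∫ v in Ioi 0, h i j v := by
    intro i j
    have e1 : (t j) ^ α = |t j| ^ α := by rw [abs_of_nonneg (ht j).1]
    have e2 : (t i) ^ α = |t i| ^ α := by rw [abs_of_nonneg (ht i).1]
    have eint : ∫ v in Ioi 0, h i j v = a i * a j *
        ((∫ v in Ioi 0, gk α (t j) v) + (∫ v in Ioi 0, gk α (t i) v)
          - ∫ v in Ioi 0, gk α (t i - t j) v) := by
      have I1 := integrableOn_gk hα hα2 (t j)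
      have I2 := integrableOn_gk hα hα2 (t i)
      have I3 := integrableOn_gk hα hα2 (t i - t j)
      rw [hh]
      simp only []
      rw [MeasureTheory.integral_const_mul]
      congr 1
      have e := MeasureTheory.integral_sub (μ := volume.restrict (Ioi 0))
        (f := fun v => gk α (t j) v + gk α (t i) v)
        (g := fun v => gk α (t i - t j) v) (I1.add I2) I3
      exact e.trans (by rw [MeasureTheory.integral_add I1 I2])
    rw [eint, e1, e2, habs, habs, habs]
    field_simp
  have hsum : ∑ i, ∑ j, a i * a j *
      ((1/2) * ((t j) ^ α + (t i) ^ α - |t i - t j| ^ α))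
      = (1/(2*c)) * ∫ v in Ioi 0, ∑ i, ∑ j, h i j v := by
    rw [MeasureTheory.integral_finset_sum _ (fun i _ => integrable_finset_sum _ (fun j _ => hint i j)),
      Finset.mul_sum]
    refine Finset.sum_congr rfl fun i _ => ?_
    rw [MeasureTheory.integral_finset_sum _ (fun j _ => hint i j), Finset.mul_sum]
    exact Finset.sum_congr rfl fun j _ => hterm i j
  rw [hsum]
  have hpos : 0 ≤ ∫ v in Ioi 0, ∑ i, ∑ j, h i j v := by
    apply setIntegral_nonneg measurableSet_Ioi
    intro v hv
    have hv0 : (0:ℝ) < v := hv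
    have hkey : ∑ i, ∑ j, h i j v =
        (((∑ i, a i) - ∑ i, a i * Real.cos (t i * v))^2
          + (∑ i, a i * Real.sin (t i * v))^2) * v ^ (-(1+α)) := by
      have step1 : ∑ i, ∑ j, h i j v = ∑ i, ∑ j,
          (a i * a j - a i * (a j * Real.cos (t j * v)) - (a i * Real.cos (t i * v)) * a j
            + (a i * Real.cos (t i * v)) * (a j * Real.cos (t j * v))
            + (a i * Real.sin (t i * v)) * (a j * Real.sin (t j * v))) * v ^ (-(1+α)) := by
        refine Finset.sum_congr rfl fun i _ => Finset.sum_congr rfl fun j _ => ?_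
        rw [hh]
        simp only [gk, sub_mul (t i) (t j) v, Real.cos_sub]
        ring
      rw [step1]
      simp only [← Finset.sum_mul]
      congr 1
      simp only [Finset.sum_add_distrib, Finset.sum_sub_distrib, ← Finset.mul_sum,
        ← Finset.sum_mul]
      ring
    rw [hkey]
    exact mul_nonneg (by positivity) (Real.rpow_pos_of_pos hv0 _).le
  positivity
end
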